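/- Let θ be a theta function for Γ_τ of type (a, b). Then θ is nonvanishing on ℂ if and only if θ is a trivial theta function, i.e. θ(z) = e^{Az² + Bz + C} for some constants A, B, C ∈ ℂ. -/

import Mathlib

open Complex Set

private lemma deriv_entire {f : ℂ → ℂ} (hf : Differentiable ℂ f) :
    Differentiable ℂ (deriv f) := by
  rw [← analyticOnNhd_univ_iff_differentiable] at hf ⊢
  exact hf.deriv

/-- `θ` is a theta function of type `(a, b)` for the lattice `Γ_τ = ℤ + τℤ`:
entire, not identically zero, with `θ(z+γ) = e^{2πi(a_γ z + b_γ)} θ(z)`. -/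
def IsThetaOfType (τ : ℂ) (a b : ℂ → ℂ) (θ : ℂ → ℂ) : Prop :=
  Differentiable ℂ θ ∧ (∃ z : ℂ, θ z ≠ 0) ∧
    ∀ γ ∈ AddSubgroup.closure ({1, τ} : Set ℂ), ∀ z : ℂ,
      θ (z + γ) = Complex.exp (2 * (Real.pi : ℂ) * Complex.I * (a γ * z + b γ)) * θ z

/-- A theta function for `Γ_τ` is nonvanishing on `ℂ` if and only if it is a trivial
theta function, i.e. `θ(z) = e^{A z² + B z + C}` for some constants `A, B, C ∈ ℂ`. -/
theorem theta_nonvanishing_iff_trivial (τ : ℂ) (hτ : 0 < τ.im)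
    (a b θ : ℂ → ℂ) (h : IsThetaOfType τ a b θ) :
    (∀ z : ℂ, θ z ≠ 0) ↔
      ∃ A B C : ℂ, ∀ z : ℂ, θ z = Complex.exp (A * z ^ 2 + B * z + C) := by
  obtain ⟨hθd, -, hθfe⟩ := h
  constructor
  · intro hnv
    set c : ℂ := 2 * (Real.pi : ℂ) * Complex.I with hc
    -- the logarithmic derivative
    set f : ℂ → ℂ := fun z => deriv θ z / θ z with hfdef
    have hθ'd : Differentiable ℂ (deriv θ) := deriv_entire hθd
    have hf : Differentiable ℂ f := hθ'd.div hθd hnv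
    -- derivative of θ(· + γ)
    have hder : ∀ γ ∈ AddSubgroup.closure ({1, τ} : Set ℂ), ∀ z : ℂ,
        deriv θ (z + γ) = Complex.exp (c * (a γ * z + b γ)) * (c * a γ * θ z + deriv θ z) := by
      intro γ hγ z
      have hfun : (fun z => θ (z + γ)) = fun z => Complex.exp (c * (a γ * z + b γ)) * θ z :=
        funext fun z => hθfe γ hγ z
      have h1 : HasDerivAt (fun z => c * (a γ * z + b γ)) (c * a γ) z := by
        have := (((hasDerivAt_id z).const_mul (a γ)).add_const (b γ)).const_mul c
        simpa [mul_comm] using this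
      have h2 : HasDerivAt (fun z => Complex.exp (c * (a γ * z + b γ)) * θ z) _ z :=
        (h1.cexp.mul (hθd z).hasDerivAt)
      have h3 : deriv (fun z => θ (z + γ)) z = deriv θ (z + γ) := deriv_comp_add_const ..
      rw [← h3, hfun, h2.deriv]
      ring
    -- functional equation for f
    have hfeq : ∀ γ ∈ AddSubgroup.closure ({1, τ} : Set ℂ), ∀ z : ℂ,
        f (z + γ) = f z + c * a γ := by
      intro γ hγ z
      have e1 := hθfe γ hγ z
      have e2 := hder γ hγ z
      have hez : Complex.exp (c * (a γ * z + b γ)) ≠ 0 := Complex.exp_ne_zero _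
      show deriv θ (z + γ) / θ (z + γ) = deriv θ z / θ z + c * a γ
      rw [e1, e2, mul_div_mul_left _ _ hez, add_div,
        mul_div_cancel_right₀ _ (hnv z)]
      ring
    -- f' is periodic
    have hper : ∀ γ ∈ AddSubgroup.closure ({1, τ} : Set ℂ), ∀ z : ℂ,
        deriv f (z + γ) = deriv f z := by
      intro γ hγ z
      have hfun : (fun z => f (z + γ)) = fun z => f z + c * a γ :=
        funext fun z => hfeq γ hγ z
      have h3 : deriv (fun z => f (z + γ)) z = deriv f (z + γ) := deriv_comp_add_const ..
      rw [← h3, hfun, deriv_add_const]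
    -- f' is bounded: its range is contained in the image of a compact parallelogram
    have hτ0 : τ.im ≠ 0 := ne_of_gt hτ
    set K : Set ℂ := (fun p : ℝ × ℝ => (p.1 : ℂ) + (p.2 : ℂ) * τ) '' (Icc 0 1 ×ˢ Icc 0 1)
      with hK
    have hKc : IsCompact K :=
      (isCompact_Icc.prod isCompact_Icc).image (by fun_prop)
    have hsub : range (deriv f) ⊆ deriv f '' K := by
      rintro - ⟨z, rfl⟩
      set y : ℝ := z.im / τ.im with hy
      set x : ℝ := z.re - y * τ.re with hx
      set w : ℂ := ((Int.fract x : ℝ) : ℂ) + ((Int.fract y : ℝ) : ℂ) * τ with hw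
      have hwK : w ∈ K := by
        rw [hK]
        refine ⟨(Int.fract x, Int.fract y), ?_, hw.symm⟩
        refine Set.mk_mem_prod ?_ ?_
        · exact ⟨Int.fract_nonneg x, (Int.fract_lt_one x).le⟩
        · exact ⟨Int.fract_nonneg y, (Int.fract_lt_one y).le⟩
      have hγmem : ((⌊x⌋ : ℂ) + (⌊y⌋ : ℂ) * τ) ∈ AddSubgroup.closure ({1, τ} : Set ℂ) := by
        have h1 : (1 : ℂ) ∈ AddSubgroup.closure ({1, τ} : Set ℂ) :=
          AddSubgroup.subset_closure (by simp)
        have h2 : τ ∈ AddSubgroup.closure ({1, τ} : Set ℂ) :=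
          AddSubgroup.subset_closure (by simp)
        have := AddSubgroup.add_mem _ (AddSubgroup.zsmul_mem _ h1 ⌊x⌋)
          (AddSubgroup.zsmul_mem _ h2 ⌊y⌋)
        simpa [zsmul_eq_mul] using this
      have hzw : z = w + ((⌊x⌋ : ℂ) + (⌊y⌋ : ℂ) * τ) := by
        have hxy : z = (x : ℂ) + (y : ℂ) * τ := by
          apply Complex.ext <;> (simp [hx, hy]; try field_simp)
        have hfx : ((Int.fract x : ℝ) : ℂ) = (x : ℂ) - (⌊x⌋ : ℂ) := by
          rw [← Int.self_sub_floor]; push_cast; ring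
        have hfy : ((Int.fract y : ℝ) : ℂ) = (y : ℂ) - (⌊y⌋ : ℂ) := by
          rw [← Int.self_sub_floor]; push_cast; ring
        rw [hw, hfx, hfy, hxy]; ring
      refine ⟨w, hwK, ?_⟩
      rw [hzw]
      exact (hper _ hγmem w).symm ▸ (hper _ hγmem w)
    have hbdd : Bornology.IsBounded (range (deriv f)) :=
      (hKc.image (deriv_entire hf).continuous).isBounded.subset hsub
    -- Liouville: f' is constant
    have hf'd : Differentiable ℂ (deriv f) := deriv_entire hf
    have hconst : ∀ z : ℂ, deriv f z = deriv f 0 := fun z =>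
      hf'd.apply_eq_apply_of_bounded hbdd z 0
    -- hence f z = (deriv f 0) * z + f 0
    have hflin : ∀ z : ℂ, f z = deriv f 0 * z + f 0 := by
      intro z
      have hg : Differentiable ℂ (fun z => f z - deriv f 0 * z) :=
        hf.sub ((differentiable_id.const_mul _))
      have hg' : ∀ z : ℂ, deriv (fun z => f z - deriv f 0 * z) z = 0 := by
        intro z
        have h1 : HasDerivAt (fun z => f z - deriv f 0 * z) (deriv f z - deriv f 0) z :=
          (hf z).hasDerivAt.sub (by simpa using ((hasDerivAt_id z).const_mul (deriv f 0)))
        rw [h1.deriv, hconst z, sub_self]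
      have h0 := is_const_of_deriv_eq_zero hg hg' z 0
      simp only [mul_zero, sub_zero] at h0
      linear_combination h0
    -- now integrate twice
    set A : ℂ := deriv f 0 / 2 with hA
    set B : ℂ := f 0 with hB
    set ψ : ℂ → ℂ := fun z => θ z * Complex.exp (-(A * z ^ 2 + B * z)) with hψ
    have hψ' : ∀ z : ℂ, HasDerivAt ψ 0 z := by
      intro z
      have h1 : HasDerivAt (fun z => -(A * z ^ 2 + B * z)) (-(deriv f 0 * z + B)) z := by
        have : HasDerivAt (fun z => -(A * z ^ 2 + B * z)) _ z := (((hasDerivAt_pow 2 z).const_mul A).add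
          ((hasDerivAt_id z).const_mul B)).neg
        convert this using 1
        rw [hA]
        norm_num <;> ring
      have h2 : HasDerivAt (fun z => θ z * Complex.exp (-(A * z ^ 2 + B * z))) _ z :=
        (hθd z).hasDerivAt.mul h1.cexp
      have hθ' : deriv θ z = (deriv f 0 * z + B) * θ z := by
        have : f z * θ z = deriv θ z := by
          show deriv θ z / θ z * θ z = deriv θ z
          exact div_mul_cancel₀ _ (hnv z)
        rw [← this, hflin z, hB]
      convert h2 using 1
      rw [hθ']
      ring
    have hψconst : ∀ z : ℂ, ψ z = θ 0 := by
      intro z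
      have hc0 := is_const_of_deriv_eq_zero (fun z => (hψ' z).differentiableAt)
        (fun z => (hψ' z).deriv) z 0
      simpa [hψ] using hc0
    refine ⟨A, B, Complex.log (θ 0), fun z => ?_⟩
    have hz := hψconst z
    rw [hψ] at hz
    simp only at hz
    have hexp : Complex.exp (A * z ^ 2 + B * z + Complex.log (θ 0)) =
        Complex.exp (A * z ^ 2 + B * z) * θ 0 := by
      rw [Complex.exp_add, Complex.exp_log (hnv 0)]
    rw [hexp, ← hz, Complex.exp_neg]
    field_simp
  · rintro ⟨A, B, C, hABC⟩ z
    rw [hABC]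
    exact Complex.exp_ne_zero _
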